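/- There is no strictly convex pentagon in the plane with vertices in ℤ², with area strictly less than 3, such that additionally for every pair of adjacent vertices the sum of the internal angles at those vertices is strictly greater than π. -/

import Mathlib

open EuclideanGeometry

noncomputable def cross2 (x y : EuclideanSpace ℝ (Fin 2)) : ℝ := x 0 * y 1 - x 1 * y 0

def IsLatticePoint2 (x : EuclideanSpace ℝ (Fin 2)) : Prop :=
  ∃ p : ℤ × ℤ, x = ![(p.1 : ℝ), (p.2 : ℝ)]

/-- Core integer arithmetic: the combinatorial data of a small convex lattice pentagon
with all "skip" crosses positive is contradictory. -/
lemma pentagon_core (A0 A1 A2 A3 A4 B0 B1 B2 B3 B4 S : ℤ)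
    (hA0 : 0 < A0) (hA1 : 0 < A1) (hA2 : 0 < A2) (hA3 : 0 < A3) (hA4 : 0 < A4)
    (hB0 : 0 < B0) (hB1 : 0 < B1) (hB2 : 0 < B2) (hB3 : 0 < B3) (hB4 : 0 < B4)
    (hS : S ≤ 5)
    (e0 : S = A0 + A1 + A3 + B0)
    (e1 : S = A1 + A2 + A4 + B1)
    (e2 : S = A2 + A3 + A0 + B2)
    (e3 : S = A3 + A4 + A1 + B3)
    (e4 : S = A4 + A0 + A2 + B4)
    (p0 : A0 * A2 = B0 * B1 + A1 * B3)
    (p1 : A1 * A3 = B1 * B2 + A2 * B4)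
    (p2 : A2 * A4 = B2 * B3 + A3 * B0)
    (p3 : A3 * A0 = B3 * B4 + A4 * B1)
    (p4 : A4 * A1 = B4 * B0 + A0 * B2) : False := by
  have bA0 : A0 ≤ 2 := by omega
  have bA1 : A1 ≤ 2 := by omega
  have bA2 : A2 ≤ 2 := by omega
  have bA3 : A3 ≤ 2 := by omega
  have bA4 : A4 ≤ 2 := by omega
  have bB0 : B0 ≤ 2 := by omega
  have bB1 : B1 ≤ 2 := by omega
  have bB2 : B2 ≤ 2 := by omega
  have bB3 : B3 ≤ 2 := by omega
  have bB4 : B4 ≤ 2 := by omega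
  interval_cases A0 <;> interval_cases A1 <;> interval_cases A2 <;>
    interval_cases A3 <;> interval_cases A4 <;> interval_cases B0 <;>
    interval_cases B1 <;> interval_cases B2 <;> interval_cases B3 <;>
    interval_cases B4 <;> omega

open InnerProductGeometry in
lemma inner_two (x y : EuclideanSpace ℝ (Fin 2)) : (inner ℝ x y : ℝ) = x 0 * y 0 + x 1 * y 1 := by
  simp [PiLp.inner_apply, Fin.sum_univ_two, RCLike.inner_apply, conj_trivial]
  ring

open InnerProductGeometry in
lemma cross2_pos_of_angles (P Q R T : EuclideanSpace ℝ (Fin 2))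
    (hc1 : 0 < cross2 (Q - P) (R - Q)) (hc2 : 0 < cross2 (R - Q) (T - R))
    (hang : Real.pi < EuclideanGeometry.angle P Q R + EuclideanGeometry.angle Q R T) :
    0 < cross2 (Q - P) (T - R) := by
  set u := Q - P with hu_def
  set w := R - Q with hw_def
  set z := T - R with hz_def
  have hu : u ≠ 0 := by
    intro h; rw [h] at hc1
    simp only [cross2] at hc1
    norm_num at hc1
  have hw : w ≠ 0 := by
    intro h; rw [h] at hc2
    simp only [cross2] at hc2
    norm_num at hc2
  have hz : z ≠ 0 := by
    intro h; rw [h] at hc2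
    simp only [cross2] at hc2
    norm_num at hc2
  have nu : (0:ℝ) < ‖u‖ := norm_pos_iff.mpr hu
  have nw : (0:ℝ) < ‖w‖ := norm_pos_iff.mpr hw
  have nz : (0:ℝ) < ‖z‖ := norm_pos_iff.mpr hz
  -- convert the point angles
  have h1 : EuclideanGeometry.angle P Q R = Real.pi - InnerProductGeometry.angle u w := by
    rw [EuclideanGeometry.angle]
    rw [show P -ᵥ Q = -u by simp [hu_def], show R -ᵥ Q = w by simp [hw_def]]
    exact InnerProductGeometry.angle_neg_left u w
  have h2 : EuclideanGeometry.angle Q R T = Real.pi - InnerProductGeometry.angle w z := by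
    rw [EuclideanGeometry.angle]
    rw [show Q -ᵥ R = -w by simp [hw_def], show T -ᵥ R = z by simp [hz_def]]
    exact InnerProductGeometry.angle_neg_left w z
  have hlt : InnerProductGeometry.angle u w + InnerProductGeometry.angle w z < Real.pi := by
    rw [h1, h2] at hang; linarith
  -- sine formulas
  have lag : ∀ x y : EuclideanSpace ℝ (Fin 2), 0 ≤ cross2 x y →
      Real.sin (InnerProductGeometry.angle x y) * (‖x‖ * ‖y‖) = cross2 x y := by
    intro x y hxy
    rw [InnerProductGeometry.sin_angle_mul_norm_mul_norm, inner_two, inner_two, inner_two]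
    rw [show (x 0 * x 0 + x 1 * x 1) * (y 0 * y 0 + y 1 * y 1) -
        (x 0 * y 0 + x 1 * y 1) * (x 0 * y 0 + x 1 * y 1) = (cross2 x y) ^ 2 by
      simp only [cross2]; ring]
    exact Real.sqrt_sq hxy
  have f1 : Real.sin (InnerProductGeometry.angle u w) * (‖u‖ * ‖w‖) = cross2 u w := lag u w hc1.le
  have f2 : Real.sin (InnerProductGeometry.angle w z) * (‖w‖ * ‖z‖) = cross2 w z := lag w z hc2.le
  have g1 : Real.cos (InnerProductGeometry.angle u w) * (‖u‖ * ‖w‖) = (inner ℝ u w : ℝ) :=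
    InnerProductGeometry.cos_angle_mul_norm_mul_norm u w
  have g2 : Real.cos (InnerProductGeometry.angle w z) * (‖w‖ * ‖z‖) = (inner ℝ w z : ℝ) :=
    InnerProductGeometry.cos_angle_mul_norm_mul_norm w z
  have s1 : 0 < Real.sin (InnerProductGeometry.angle u w) := by nlinarith [mul_pos nu nw]
  have apos : 0 < InnerProductGeometry.angle u w := by
    rcases (InnerProductGeometry.angle_nonneg u w).lt_or_eq with h | h
    · exact h
    · rw [← h, Real.sin_zero] at s1; linarith
  have hsin : 0 < Real.sin (InnerProductGeometry.angle u w + InnerProductGeometry.angle w z) :=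
    Real.sin_pos_of_pos_of_lt_pi (by linarith [InnerProductGeometry.angle_nonneg w z]) hlt
  rw [Real.sin_add] at hsin
  have key : cross2 u z * (‖w‖ * ‖w‖) = cross2 u w * (inner ℝ w z : ℝ) +
      (inner ℝ u w : ℝ) * cross2 w z := by
    rw [← real_inner_self_eq_norm_mul_norm, inner_two, inner_two, inner_two]
    simp only [cross2]; ring
  have expand : (Real.sin (InnerProductGeometry.angle u w) * Real.cos (InnerProductGeometry.angle w z) +
      Real.cos (InnerProductGeometry.angle u w) * Real.sin (InnerProductGeometry.angle w z)) * ((‖u‖ * ‖w‖) * (‖w‖ * ‖z‖)) =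
      cross2 u w * (inner ℝ w z : ℝ) + (inner ℝ u w : ℝ) * cross2 w z := by
    rw [← f1, ← f2, ← g1, ← g2]; ring
  have hcomb : 0 < cross2 u w * (inner ℝ w z : ℝ) + (inner ℝ u w : ℝ) * cross2 w z := by
    rw [← expand]
    exact mul_pos hsin (by positivity)
  nlinarith [mul_pos nw nw]

/-- There is no strictly convex pentagon in the plane with vertices in `ℤ²`,
with area strictly less than 3, such that for every pair of adjacent vertices the sum of the
internal angles at those vertices is strictly greater than `π`. -/
theorem no_small_lattice_pentagon_with_adjacent_angles :
    ¬ ∃ v : ZMod 5 → EuclideanSpace ℝ (Fin 2),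
      (∀ i, IsLatticePoint2 (v i)) ∧
      (∀ i, v (i + 1) - v i ≠ 0) ∧
      (∀ i, 0 < cross2 (v (i + 1) - v i) (v (i + 2) - v (i + 1))) ∧
      (∀ i, v i ∉ convexHull ℝ (v '' {j | j ≠ i})) ∧
      ((1 / 2) * ∑ i : ZMod 5, cross2 (v i) (v (i + 1)) < 3) ∧
      (∀ i : ZMod 5,
        Real.pi < ∠ (v (i - 1)) (v i) (v (i + 1)) + ∠ (v i) (v (i + 1)) (v (i + 2))) := by
  rintro ⟨v, hlat, -, hcross, -, harea, hang⟩
  choose p hp using hlat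
  have hv0 : ∀ i, v i 0 = ((p i).1 : ℝ) := fun i => by rw [hp i]; rfl
  have hv1 : ∀ i, v i 1 = ((p i).2 : ℝ) := fun i => by rw [hp i]; rfl
  have hcp : ∀ i j : ZMod 5, cross2 (v i) (v j) =
      (((p i).1 * (p j).2 - (p i).2 * (p j).1 : ℤ) : ℝ) := by
    intro i j; simp only [cross2, hv0, hv1]; push_cast; ring
  have hcd : ∀ i j k l : ZMod 5, cross2 (v j - v i) (v l - v k) =
      ((((p j).1 - (p i).1) * ((p l).2 - (p k).2) -
        ((p j).2 - (p i).2) * ((p l).1 - (p k).1) : ℤ) : ℝ) := by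
    intro i j k l
    have e0 : ∀ i j : ZMod 5, (v j - v i) 0 = ((p j).1 : ℝ) - ((p i).1 : ℝ) := fun i j => by
      show v j 0 - v i 0 = _
      rw [hv0, hv0]
    have e1 : ∀ i j : ZMod 5, (v j - v i) 1 = ((p j).2 : ℝ) - ((p i).2 : ℝ) := fun i j => by
      show v j 1 - v i 1 = _
      rw [hv1, hv1]
    simp only [cross2, e0, e1]; push_cast; ring
  -- instantiate the convexity hypothesis
  have hc0 := hcross 0
  rw [show ((0:ZMod 5)+1) = 1 by decide, show ((0:ZMod 5)+2) = 2 by decide] at hc0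
  have hc1 := hcross 1
  rw [show ((1:ZMod 5)+1) = 2 by decide, show ((1:ZMod 5)+2) = 3 by decide] at hc1
  have hc2 := hcross 2
  rw [show ((2:ZMod 5)+1) = 3 by decide, show ((2:ZMod 5)+2) = 4 by decide] at hc2
  have hc3 := hcross 3
  rw [show ((3:ZMod 5)+1) = 4 by decide, show ((3:ZMod 5)+2) = 0 by decide] at hc3
  have hc4 := hcross 4
  rw [show ((4:ZMod 5)+1) = 0 by decide, show ((4:ZMod 5)+2) = 1 by decide] at hc4
  -- instantiate the angle hypothesis
  have hg0 := hang 0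
  rw [show ((0:ZMod 5)-1) = 4 by decide, show ((0:ZMod 5)+1) = 1 by decide,
      show ((0:ZMod 5)+2) = 2 by decide] at hg0
  have hg1 := hang 1
  rw [show ((1:ZMod 5)-1) = 0 by decide, show ((1:ZMod 5)+1) = 2 by decide,
      show ((1:ZMod 5)+2) = 3 by decide] at hg1
  have hg2 := hang 2
  rw [show ((2:ZMod 5)-1) = 1 by decide, show ((2:ZMod 5)+1) = 3 by decide,
      show ((2:ZMod 5)+2) = 4 by decide] at hg2
  have hg3 := hang 3
  rw [show ((3:ZMod 5)-1) = 2 by decide, show ((3:ZMod 5)+1) = 4 by decide,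
      show ((3:ZMod 5)+2) = 0 by decide] at hg3
  have hg4 := hang 4
  rw [show ((4:ZMod 5)-1) = 3 by decide, show ((4:ZMod 5)+1) = 0 by decide,
      show ((4:ZMod 5)+2) = 1 by decide] at hg4
  -- skip crosses are positive
  have hB0' := cross2_pos_of_angles (v 0) (v 1) (v 2) (v 3) hc0 hc1 hg1
  have hB1' := cross2_pos_of_angles (v 1) (v 2) (v 3) (v 4) hc1 hc2 hg2
  have hB2' := cross2_pos_of_angles (v 2) (v 3) (v 4) (v 0) hc2 hc3 hg3
  have hB3' := cross2_pos_of_angles (v 3) (v 4) (v 0) (v 1) hc3 hc4 hg4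
  have hB4' := cross2_pos_of_angles (v 4) (v 0) (v 1) (v 2) hc4 hc0 hg0
  -- integer versions
  rw [hcd 0 1 1 2] at hc0
  rw [hcd 1 2 2 3] at hc1
  rw [hcd 2 3 3 4] at hc2
  rw [hcd 3 4 4 0] at hc3
  rw [hcd 4 0 0 1] at hc4
  rw [hcd 0 1 2 3] at hB0'
  rw [hcd 1 2 3 4] at hB1'
  rw [hcd 2 3 4 0] at hB2'
  rw [hcd 3 4 0 1] at hB3'
  rw [hcd 4 0 1 2] at hB4'
  have hA0 : (0:ℤ) < ((p 1).1 - (p 0).1) * ((p 2).2 - (p 1).2) -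
      ((p 1).2 - (p 0).2) * ((p 2).1 - (p 1).1) := by exact_mod_cast hc0
  have hA1 : (0:ℤ) < ((p 2).1 - (p 1).1) * ((p 3).2 - (p 2).2) -
      ((p 2).2 - (p 1).2) * ((p 3).1 - (p 2).1) := by exact_mod_cast hc1
  have hA2 : (0:ℤ) < ((p 3).1 - (p 2).1) * ((p 4).2 - (p 3).2) -
      ((p 3).2 - (p 2).2) * ((p 4).1 - (p 3).1) := by exact_mod_cast hc2
  have hA3 : (0:ℤ) < ((p 4).1 - (p 3).1) * ((p 0).2 - (p 4).2) -
      ((p 4).2 - (p 3).2) * ((p 0).1 - (p 4).1) := by exact_mod_cast hc3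
  have hA4 : (0:ℤ) < ((p 0).1 - (p 4).1) * ((p 1).2 - (p 0).2) -
      ((p 0).2 - (p 4).2) * ((p 1).1 - (p 0).1) := by exact_mod_cast hc4
  have hB0 : (0:ℤ) < ((p 1).1 - (p 0).1) * ((p 3).2 - (p 2).2) -
      ((p 1).2 - (p 0).2) * ((p 3).1 - (p 2).1) := by exact_mod_cast hB0'
  have hB1 : (0:ℤ) < ((p 2).1 - (p 1).1) * ((p 4).2 - (p 3).2) -
      ((p 2).2 - (p 1).2) * ((p 4).1 - (p 3).1) := by exact_mod_cast hB1'
  have hB2 : (0:ℤ) < ((p 3).1 - (p 2).1) * ((p 0).2 - (p 4).2) -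
      ((p 3).2 - (p 2).2) * ((p 0).1 - (p 4).1) := by exact_mod_cast hB2'
  have hB3 : (0:ℤ) < ((p 4).1 - (p 3).1) * ((p 1).2 - (p 0).2) -
      ((p 4).2 - (p 3).2) * ((p 1).1 - (p 0).1) := by exact_mod_cast hB3'
  have hB4 : (0:ℤ) < ((p 0).1 - (p 4).1) * ((p 2).2 - (p 1).2) -
      ((p 0).2 - (p 4).2) * ((p 2).1 - (p 1).1) := by exact_mod_cast hB4'
  -- the shoelace sum
  rw [show (Finset.univ : Finset (ZMod 5)) = {0, 1, 2, 3, 4} by decide] at harea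
  rw [Finset.sum_insert (by decide), Finset.sum_insert (by decide),
      Finset.sum_insert (by decide), Finset.sum_insert (by decide),
      Finset.sum_singleton] at harea
  rw [show ((0:ZMod 5)+1) = 1 by decide, show ((1:ZMod 5)+1) = 2 by decide,
      show ((2:ZMod 5)+1) = 3 by decide, show ((3:ZMod 5)+1) = 4 by decide,
      show ((4:ZMod 5)+1) = 0 by decide] at harea
  rw [hcp 0 1, hcp 1 2, hcp 2 3, hcp 3 4, hcp 4 0] at harea
  have hS : ((p 0).1 * (p 1).2 - (p 0).2 * (p 1).1) +
      ((p 1).1 * (p 2).2 - (p 1).2 * (p 2).1) +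
      ((p 2).1 * (p 3).2 - (p 2).2 * (p 3).1) +
      ((p 3).1 * (p 4).2 - (p 3).2 * (p 4).1) +
      ((p 4).1 * (p 0).2 - (p 4).2 * (p 0).1) ≤ 5 := by
    have h6 : ((((p 0).1 * (p 1).2 - (p 0).2 * (p 1).1) +
        ((p 1).1 * (p 2).2 - (p 1).2 * (p 2).1) +
        ((p 2).1 * (p 3).2 - (p 2).2 * (p 3).1) +
        ((p 3).1 * (p 4).2 - (p 3).2 * (p 4).1) +
        ((p 4).1 * (p 0).2 - (p 4).2 * (p 0).1) : ℤ) : ℝ) < 6 := by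
      push_cast
      push_cast at harea
      linarith
    have h6' : (((p 0).1 * (p 1).2 - (p 0).2 * (p 1).1) +
        ((p 1).1 * (p 2).2 - (p 1).2 * (p 2).1) +
        ((p 2).1 * (p 3).2 - (p 2).2 * (p 3).1) +
        ((p 3).1 * (p 4).2 - (p 3).2 * (p 4).1) +
        ((p 4).1 * (p 0).2 - (p 4).2 * (p 0).1) : ℤ) < 6 := by exact_mod_cast h6
    omega
  exact pentagon_core _ _ _ _ _ _ _ _ _ _ _
    hA0 hA1 hA2 hA3 hA4 hB0 hB1 hB2 hB3 hB4 hS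
    (by ring) (by ring) (by ring) (by ring) (by ring)
    (by ring) (by ring) (by ring) (by ring) (by ring)
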